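/- The variance gap Var(ω̂_ii) − Var(ω̄_ii) equals 2(1−ω_ii)/(1+d_i)² + d_i(d_i−1)ω_ii/(1+d_i)², which is nonnegative since 0 ≤ ω_ii ≤ 1 and d_i ≥ 0. -/

import Mathlib

open Finset

/-- A spanning converging forest of the digraph with edge relation `E`,
encoded by its successor map `f : V → Option V` (`f i = some j` means edge `(i,j)`
is in the forest, `f i = none` means `i` is a root).  Acyclicity is expressed by a
height function that strictly decreases along edges. -/
def IsSCF {V : Type*} (E : V → V → Prop) (f : V → Option V) : Prop :=
  (∀ i j, f i = some j → E i j) ∧ ∃ h : V → ℕ, ∀ i j, f i = some j → h j < h i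

open scoped Classical in
/-- The set `F` of all spanning converging forests of the digraph `E`. -/
noncomputable def forests {V : Type*} [Fintype V] [DecidableEq V]
    (E : V → V → Prop) : Finset (V → Option V) :=
  Finset.univ.filter (IsSCF E)

/-- The root `r_φ(i)` of the tree containing node `i` in the forest `f`:
follow successors until reaching a root. -/
def rootOf {V : Type*} [Fintype V] (f : V → Option V) (i : V) : V :=
  (fun x => (f x).getD x)^[Fintype.card V] i

/-- The combinatorial forest-matrix entry `ω_{ij} = |F_{ij}| / |F|`. -/
noncomputable def fOmega {V : Type*} [Fintype V] [DecidableEq V]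
    (E : V → V → Prop) (i j : V) : ℝ :=
  (((forests E).filter (fun f => rootOf f i = j)).card : ℝ) / ((forests E).card : ℝ)

/-- Expectation of `g` under a uniformly random spanning converging forest. -/
noncomputable def expVal {V : Type*} [Fintype V] [DecidableEq V]
    (E : V → V → Prop) (g : (V → Option V) → ℝ) : ℝ :=
  (∑ f ∈ forests E, g f) / ((forests E).card : ℝ)

/-- Variance of `g` under a uniformly random spanning converging forest. -/
noncomputable def varVal {V : Type*} [Fintype V] [DecidableEq V]
    (E : V → V → Prop) (g : (V → Option V) → ℝ) : ℝ :=
  expVal E (fun f => (g f - expVal E g) ^ 2)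

/-- The indicator estimator `ω̂_{ij}(φ) = 1_{r_φ(i) = j}`. -/
noncomputable def indEst {V : Type*} [Fintype V] [DecidableEq V]
    (i j : V) (f : V → Option V) : ℝ :=
  if rootOf f i = j then 1 else 0

/-- Out-degree `d_i` of node `i`. -/
def outDeg {V : Type*} [Fintype V] (E : V → V → Prop) [DecidableRel E] (i : V) : ℕ :=
  (Finset.univ.filter (fun j => E i j)).card

/-- In-neighbors `N⁻(j)` of node `j`. -/
def inNbrs {V : Type*} [Fintype V] (E : V → V → Prop) [DecidableRel E] (j : V) : Finset V :=
  Finset.univ.filter (fun k => E k j)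

/-- The out-degree Laplacian `L = D - A`. -/
noncomputable def lap {V : Type*} [Fintype V] [DecidableEq V]
    (E : V → V → Prop) [DecidableRel E] : Matrix V V ℝ :=
  Matrix.of fun i j => (if i = j then (outDeg E i : ℝ) else 0) - (if E i j then (1 : ℝ) else 0)

/-- The forest matrix `Ω = (I + L)⁻¹`. -/
noncomputable def forestMatrix {V : Type*} [Fintype V] [DecidableEq V]
    (E : V → V → Prop) [DecidableRel E] : Matrix V V ℝ :=
  (1 + lap E)⁻¹



namespace SCFAux

set_option linter.unusedSectionVars false
set_option linter.unusedVariables false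
set_option maxHeartbeats 1000000

variable {V : Type*} [Fintype V] [DecidableEq V] {E : V → V → Prop}

/-- one step of following successors -/
def st (f : V → Option V) : V → V := fun y => (f y).getD y

lemma iter_per {s : V → V} {x : V} {a p : ℕ} (h : s^[a + p] x = s^[a] x) (m : ℕ) :
    s^[a + m * p] x = s^[a] x := by
  induction m with
  | zero => simp
  | succ c ih =>
      have e : a + (c + 1) * p = p + (a + c * p) := by ring
      rw [e, Function.iterate_add_apply, ih]
      rw [← Function.iterate_add_apply]; rw [add_comm] at h; exact h

lemma fix_le {s : V → V} {x : V} {a b : ℕ} (hab : a ≤ b) (h : s (s^[a] x) = s^[a] x) :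
    s^[b] x = s^[a] x := by
  have e : b = (b - a) + a := by omega
  rw [e, Function.iterate_add_apply]
  exact Function.iterate_fixed h _

lemma exists_small_fix {s : V → V} {x : V} {t : ℕ} (h : s (s^[t] x) = s^[t] x) :
    ∃ a, a ≤ Fintype.card V ∧ s (s^[a] x) = s^[a] x := by
  set N := Fintype.card V with hN
  by_cases ht : t ≤ N
  · exact ⟨t, ht, h⟩
  have hcard : Fintype.card V < Fintype.card (Fin (N + 1)) := by simp [hN]
  obtain ⟨m, m', hne, heq⟩ :=
    Fintype.exists_ne_map_eq_of_card_lt (fun m : Fin (N + 1) => s^[(m : ℕ)] x) hcard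
  have hne' : (m : ℕ) ≠ (m' : ℕ) := fun hh => hne (Fin.val_injective hh)
  have main : ∀ a b : ℕ, a < b → b ≤ N → s^[a] x = s^[b] x →
      ∃ a', a' ≤ N ∧ s (s^[a'] x) = s^[a'] x := by
    intro a b hab hbN heq2
    set p := b - a with hp
    have hp1 : 1 ≤ p := by omega
    have hper : s^[a + p] x = s^[a] x := by
      have e : a + p = b := by omega
      rw [e]; exact heq2.symm
    have hM : s^[a + t * p] x = s^[a] x := iter_per hper t
    have hMt : t ≤ a + t * p := by nlinarith
    have hfixM : s^[a + t * p] x = s^[t] x := fix_le hMt h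
    refine ⟨a, by omega, ?_⟩
    rw [← hM, hfixM, h, ← hfixM, hM]
  rcases Nat.lt_or_ge (m : ℕ) (m' : ℕ) with hlt | hge
  · exact main m m' hlt (by omega) heq
  · exact main m' m (by omega) (by omega) heq.symm

lemma reach_fix (s : V → V) (x : V) (t : ℕ) (h : s (s^[t] x) = s^[t] x) :
    s (s^[Fintype.card V] x) = s^[Fintype.card V] x := by
  obtain ⟨a, haN, hfa⟩ := exists_small_fix h
  rw [fix_le haN hfa]; exact hfa

lemma desc_lt {u : ℕ → ℕ} {b : ℕ} (h : ∀ m, m < b → u (m + 1) < u m) :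
    ∀ a a', a < a' → a' ≤ b → u a' < u a := by
  intro a a' haa' ha'b
  induction a' with
  | zero => omega
  | succ c ih =>
      have hc : u (c + 1) < u c := h c (by omega)
      rcases Nat.lt_or_ge a c with h1 | h1
      · exact lt_trans hc (ih h1 (by omega))
      · have e : a = c := by omega
        rw [e]; exact hc


lemma st_of_none {f : V → Option V} {y : V} (h : f y = none) : st f y = y := by
  simp [st, h]

lemma st_of_some {f : V → Option V} {y z : V} (h : f y = some z) : st f y = z := by
  simp [st, h]

lemma iterate_agree {s s' : V → V} {A : V → Prop} (hs : ∀ y, ¬ A y → s y = s' y)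
    {x : V} : ∀ {t : ℕ}, (∀ m, m < t → ¬ A (s^[m] x)) → s^[t] x = s'^[t] x := by
  intro t
  induction t with
  | zero => intro _; rfl
  | succ c ih =>
      intro h
      rw [Function.iterate_succ_apply', Function.iterate_succ_apply',
        ← ih (fun m hm => h m (by omega)), hs _ (h c (by omega))]

lemma rootOf_def (f : V → Option V) (x : V) : rootOf f x = (st f)^[Fintype.card V] x := rfl

lemma height_le {f : V → Option V} {h : V → ℕ} (hh : ∀ a b, f a = some b → h b < h a)
    (x : V) (t : ℕ) : h ((st f)^[t] x) ≤ h x := by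
  induction t with
  | zero => simp
  | succ c ih =>
      rw [Function.iterate_succ_apply']
      rcases he : f ((st f)^[c] x) with _ | z
      · rw [st_of_none he]; exact ih
      · rw [st_of_some he]; exact le_trans (le_of_lt (hh _ _ he)) ih

/-- every node's root is an actual root -/
lemma root_none (hf : IsSCF E f) (x : V) : f (rootOf f x) = none := by
  obtain ⟨hedge, h, hh⟩ := hf
  have key : ∃ t, t ≤ Fintype.card V ∧ f ((st f)^[t] x) = none := by
    by_contra hc
    push_neg at hc
    have hdesc : ∀ m, m < Fintype.card V → h ((st f)^[m+1] x) < h ((st f)^[m] x) := by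
      intro m hm
      rcases he : f ((st f)^[m] x) with _ | z
      · exact absurd he (hc m (by omega))
      · rw [Function.iterate_succ_apply', st_of_some he]; exact hh _ _ he
    have hcard : Fintype.card V < Fintype.card (Fin (Fintype.card V + 1)) := by simp
    obtain ⟨m, m', hne, heq⟩ := Fintype.exists_ne_map_eq_of_card_lt
      (fun m : Fin (Fintype.card V + 1) => (st f)^[(m : ℕ)] x) hcard
    have hne' : (m : ℕ) ≠ (m' : ℕ) := fun hhh => hne (Fin.val_injective hhh)
    have habs : ∀ a b : ℕ, a < b → b ≤ Fintype.card V →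
        (st f)^[a] x = (st f)^[b] x → False := by
      intro a b hab hbN heq2
      have := desc_lt (u := fun m => h ((st f)^[m] x)) hdesc a b hab hbN
      simp only [heq2] at this
      omega
    rcases Nat.lt_or_ge (m : ℕ) (m' : ℕ) with hlt | hge
    · exact habs m m' hlt (by omega) heq
    · exact habs m' m (by omega) (by omega) heq.symm
  obtain ⟨t, htN, hft⟩ := key
  have : (st f)^[Fintype.card V] x = (st f)^[t] x :=
    fix_le htN (by rw [st_of_none hft])
  rw [rootOf_def, this]; exact hft

lemma st_rootOf (hf : IsSCF E f) (x : V) : st f (rootOf f x) = rootOf f x :=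
  st_of_none (root_none hf x)

lemma rootOf_iter (hf : IsSCF E f) (x : V) (t : ℕ) :
    rootOf f ((st f)^[t] x) = rootOf f x := by
  rw [rootOf_def, ← Function.iterate_add_apply, add_comm, Function.iterate_add_apply,
    ← rootOf_def]
  exact Function.iterate_fixed (st_rootOf hf x) t

lemma rootOf_eq_self_iff (hf : IsSCF E f) {x : V} : rootOf f x = x ↔ f x = none := by
  constructor
  · intro h; have := root_none hf x; rwa [h] at this
  · intro h; rw [rootOf_def]; exact Function.iterate_fixed (st_of_none h) _

lemma rootOf_succ (hf : IsSCF E f) {x j : V} (hx : f x = some j) :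
    rootOf f j = rootOf f x := by
  have : (st f)^[1] x = j := by simp [st_of_some hx]
  rw [← this, rootOf_iter hf]

/-- the path from a successor never returns to the node -/
lemma no_return (hf : IsSCF E f) {x j : V} (hx : f x = some j) (t : ℕ) :
    (st f)^[t] j ≠ x := by
  obtain ⟨hedge, h, hh⟩ := hf
  have h1 : h j < h x := hh _ _ hx
  have h2 : h ((st f)^[t] j) ≤ h j := height_le hh j t
  intro he
  rw [he] at h2; omega

/-- build an SCF from stabilization witnesses -/
lemma isSCF_of_stab {f : V → Option V} (hedge : ∀ a b, f a = some b → E a b)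
    (hstab : ∀ x, ∃ t, f ((st f)^[t] x) = none) : IsSCF E f := by
  refine ⟨hedge, fun x => Nat.find (hstab x), ?_⟩
  intro a b hab
  have hspec := Nat.find_spec (hstab a)
  have hpos : 0 < Nat.find (hstab a) := by
    rcases Nat.eq_zero_or_pos (Nat.find (hstab a)) with h0 | h
    · rw [h0] at hspec; simp at hspec; rw [hab] at hspec; exact absurd hspec (by simp)
    · exact h
  have he : (st f)^[Nat.find (hstab a)] a = (st f)^[Nat.find (hstab a) - 1] b := by
    conv_lhs => rw [show Nat.find (hstab a) = (Nat.find (hstab a) - 1) + 1 from by omega]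
    rw [Function.iterate_succ_apply, st_of_some hab]
  have hb : f ((st f)^[Nat.find (hstab a) - 1] b) = none := by rw [← he]; exact hspec
  have := Nat.find_min' (hstab b) hb
  show Nat.find (hstab b) < Nat.find (hstab a)
  omega

/-- a root of an SCF satisfies stabilization clean form -/
lemma stab_root (hf : IsSCF E f) (x : V) : ∃ t, f ((st f)^[t] x) = none :=
  ⟨Fintype.card V, root_none hf x⟩


lemma rootOf_def' (f : V → Option V) (x : V) :
    rootOf f x = (st f)^[Fintype.card V] x := rfl

lemma hit_agree {A : V → Prop} {s s' : V → V} (hss : ∀ y, ¬ A y → s y = s' y) {x : V}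
    (hex : ∃ t, A (s^[t] x)) : ∃ t, A (s'^[t] x) ∧ s'^[t] x = s^[t] x := by
  classical
  have hm : ∀ m, m < Nat.find hex → ¬ A (s^[m] x) := fun m hm => Nat.find_min hex hm
  have heq : s^[Nat.find hex] x = s'^[Nat.find hex] x := iterate_agree hss hm
  exact ⟨Nat.find hex, heq ▸ Nat.find_spec hex, heq.symm⟩

section Maps
variable (hE : ∀ a, ¬ E a a) {i : V}

/-! ### Bijection A : forests with `f i = none` and a pending edge `i→j` whose
root of `j` is not `i`  ↔  forests with `g i ≠ none` -/

lemma path_avoids_i {f : V → Option V} (hf : IsSCF E f) (hfi : f i = none)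
    {j : V} (hr : rootOf f j ≠ i) (t : ℕ) : (st f)^[t] j ≠ i := by
  intro h
  apply hr
  have := rootOf_iter hf j t
  rw [h] at this
  rw [← this, rootOf_eq_self_iff hf]
  exact hfi

lemma scf_A_fwd {f : V → Option V} {j : V} (hf : IsSCF E f) (hfi : f i = none)
    (hij : E i j) (hr : rootOf f j ≠ i) :
    IsSCF E (Function.update f i (some j)) := by
  set g := Function.update f i (some j) with hg
  have hgi : g i = some j := Function.update_self _ _ _
  have hgoff : ∀ y, y ≠ i → g y = f y := fun y hy => Function.update_of_ne hy _ _
  have hstoff : ∀ y, ¬ (y = i) → st f y = st g y := by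
    intro y hy; unfold st; rw [hgoff y hy]
  refine isSCF_of_stab (E := E) ?_ ?_
  · intro a b hab
    by_cases ha : a = i
    · subst ha; rw [hgi] at hab; cases hab; exact hij
    · rw [hgoff a ha] at hab; exact hf.1 a b hab
  · intro x
    have avoid : ∀ t, (st f)^[t] j ≠ i := path_avoids_i hf hfi hr
    have hjpath : ∀ t, (st g)^[t] j = (st f)^[t] j := by
      intro t
      exact (iterate_agree (A := (· = i)) hstoff (fun m _ => avoid m)).symm
    have hrj : g (rootOf f j) = none := by
      rw [hgoff _ hr]; exact root_none hf j
    by_cases hroot : rootOf f x = i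
    · -- f-path from x hits i
      have hex : ∃ t, ((st f)^[t] x = i) := ⟨Fintype.card V, hroot⟩
      obtain ⟨t₀, hA, -⟩ := hit_agree (A := (· = i)) hstoff hex
      refine ⟨Fintype.card V + (1 + t₀), ?_⟩
      rw [Function.iterate_add_apply, Function.iterate_add_apply,
        Function.iterate_one, hA, st_of_some hgi, hjpath, ← rootOf_def']
      exact hrj
    · have avoidx : ∀ t, (st f)^[t] x ≠ i := path_avoids_i hf hfi hroot
      refine ⟨Fintype.card V, ?_⟩
      rw [← (iterate_agree (A := (· = i)) hstoff (fun m _ => avoidx m)), ← rootOf_def',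
        hgoff _ hroot]
      exact root_none hf x

lemma scf_A_inv {g : V → Option V} {j : V} (hg : IsSCF E g) (hgi : g i = some j) :
    IsSCF E (Function.update g i none) ∧ rootOf (Function.update g i none) j ≠ i := by
  set f := Function.update g i none with hfdef
  have hfi : f i = none := Function.update_self _ _ _
  have hfoff : ∀ y, y ≠ i → f y = g y := fun y hy => Function.update_of_ne hy _ _
  have hstoff : ∀ y, ¬ (y = i) → st g y = st f y := by
    intro y hy; unfold st; rw [hfoff y hy]
  have hscf : IsSCF E f := by
    refine isSCF_of_stab (E := E) ?_ ?_
    · intro a b hab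
      by_cases ha : a = i
      · subst ha; rw [hfi] at hab; cases hab
      · rw [hfoff a ha] at hab; exact hg.1 a b hab
    · intro x
      by_cases hex : ∃ t, (st g)^[t] x = i
      · obtain ⟨t₀, hA, -⟩ := hit_agree (A := (· = i)) hstoff hex
        refine ⟨t₀, ?_⟩
        rw [hA]; exact hfi
      · push_neg at hex
        refine ⟨Fintype.card V, ?_⟩
        rw [← (iterate_agree (A := (· = i)) hstoff (fun m _ => hex m)), ← rootOf_def']
        have hri : rootOf g x ≠ i := by
          intro h; exact hex (Fintype.card V) (by rw [← rootOf_def']; exact h)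
        rw [hfoff _ hri]
        exact root_none hg x
  refine ⟨hscf, ?_⟩
  have avoid : ∀ t, (st g)^[t] j ≠ i := no_return hg hgi
  have : rootOf f j = rootOf g j := by
    rw [rootOf_def', rootOf_def']
    exact (iterate_agree (A := (· = i)) hstoff (fun m _ => avoid m)).symm
  rw [this, rootOf_succ hg hgi]
  intro h
  rw [rootOf_eq_self_iff hg] at h
  rw [h] at hgi; cases hgi


open scoped Classical in
/-- the last node before the path from `j` first reaches `i` -/
noncomputable def hitV (f : V → Option V) (i j : V) : V :=
  if h : ∃ t, (st f)^[t] j = i then (st f)^[Nat.find h - 1] j else j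

lemma hitV_eq {f : V → Option V} {i j : V} {t₁ : ℕ} (h1 : 0 < t₁)
    (h2 : (st f)^[t₁] j = i) (h3 : ∀ m, m < t₁ → (st f)^[m] j ≠ i) :
    hitV f i j = (st f)^[t₁ - 1] j := by
  have hex : ∃ t, (st f)^[t] j = i := ⟨t₁, h2⟩
  unfold hitV
  rw [dif_pos hex]
  congr 2
  have ha : Nat.find hex ≤ t₁ := Nat.find_min' hex h2
  have hb : ¬ (Nat.find hex < t₁) := fun hlt => h3 _ hlt (Nat.find_spec hex)
  omega

section MapsB
variable {i : V}

/-- data for bijection B forward -/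
lemma scf_B_fwd (hE : ∀ a, ¬ E a a) {f : V → Option V} {j : V} (hf : IsSCF E f) (hfi : f i = none)
    (hij : E i j) (hr : rootOf f j = i) :
    IsSCF E (Function.update (Function.update f i (some j)) (hitV f i j) none) ∧
    rootOf (Function.update (Function.update f i (some j)) (hitV f i j) none) i = hitV f i j ∧
    f (hitV f i j) = some i ∧
    (Function.update (Function.update f i (some j)) (hitV f i j) none) i = some j := by
  classical
  have hji : j ≠ i := fun h => hE i (h ▸ hij)
  have hex : ∃ t, (st f)^[t] j = i := ⟨Fintype.card V, by rw [← rootOf_def']; exact hr⟩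
  set t₁ := Nat.find hex with ht₁def
  have ht₁spec : (st f)^[t₁] j = i := Nat.find_spec hex
  have hmin : ∀ m, m < t₁ → (st f)^[m] j ≠ i := fun m hm => Nat.find_min hex hm
  have ht₁pos : 0 < t₁ := by
    rcases Nat.eq_zero_or_pos t₁ with h0 | h
    · rw [h0] at ht₁spec; simp at ht₁spec; exact absurd ht₁spec hji
    · exact h
  have hvdef : hitV f i j = (st f)^[t₁ - 1] j := hitV_eq ht₁pos ht₁spec hmin
  set v := hitV f i j with hv
  have hv_ne_i : v ≠ i := by rw [hvdef]; exact hmin _ (by omega)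
  have hstv : st f v = i := by
    have e : (st f)^[t₁] j = st f ((st f)^[t₁ - 1] j) := by
      conv_lhs => rw [show t₁ = (t₁ - 1) + 1 from by omega]
      exact Function.iterate_succ_apply' _ _ _
    rw [hvdef, ← e]; exact ht₁spec
  have hfv : f v = some i := by
    rcases he : f v with _ | z
    · exact absurd ((st_of_none he).symm.trans hstv) hv_ne_i
    · rw [st_of_some he] at hstv; rw [hstv]
  set h' := Function.update (Function.update f i (some j)) v none with hh'
  have h'i : h' i = some j := by
    rw [hh', Function.update_of_ne (Ne.symm hv_ne_i), Function.update_self]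
  have h'v : h' v = none := Function.update_self _ _ _
  have h'off : ∀ y, ¬ (y = i ∨ y = v) → h' y = f y := by
    intro y hy; push_neg at hy
    rw [hh', Function.update_of_ne hy.2, Function.update_of_ne hy.1]
  have stoff : ∀ y, ¬ (y = i ∨ y = v) → st f y = st h' y := by
    intro y hy; unfold st; rw [h'off y hy]
  -- non-roots along the path
  have nonroot : ∀ m, m < t₁ → f ((st f)^[m] j) ≠ none := by
    intro m hm hnone
    have : (st f)^[t₁] j = (st f)^[m] j := fix_le (le_of_lt hm) (st_of_none hnone)
    exact hmin m hm (this ▸ ht₁spec)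
  -- heights strictly decrease, so the path does not revisit v before the end
  obtain ⟨hedge, hgt, hh⟩ := hf
  have hdesc : ∀ m, m < t₁ → hgt ((st f)^[m+1] j) < hgt ((st f)^[m] j) := by
    intro m hm
    rcases he : f ((st f)^[m] j) with _ | z
    · exact absurd he (nonroot m hm)
    · rw [Function.iterate_succ_apply', st_of_some he]; exact hh _ _ he
  have path_ne_v : ∀ m, m < t₁ - 1 → (st f)^[m] j ≠ v := by
    intro m hm heq
    have hlt : hgt ((st f)^[t₁ - 1] j) < hgt ((st f)^[m] j) := by
      have : ∀ a a', a < a' → a' ≤ t₁ → hgt ((st f)^[a'] j) < hgt ((st f)^[a] j) := by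
        intro a a' haa' ha'
        induction a' with
        | zero => omega
        | succ c ih =>
            have hc : hgt ((st f)^[c+1] j) < hgt ((st f)^[c] j) := hdesc c (by omega)
            rcases Nat.lt_or_ge a c with h1 | h1
            · exact lt_trans hc (ih h1 (by omega))
            · have e : a = c := by omega
              rw [e]; exact hc
      exact this m (t₁ - 1) hm (by omega)
    rw [heq, hvdef] at hlt
    omega
  have hfscf : IsSCF E f := ⟨hedge, hgt, hh⟩
  -- the reversed path inside h'
  have claim : ∀ m, m ≤ t₁ - 1 → (st h')^[m+1] i = (st f)^[m] j := by
    intro m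
    induction m with
    | zero => intro _; simpa using st_of_some h'i
    | succ c ih =>
        intro hc
        have hc' : c ≤ t₁ - 1 := by omega
        have hy : ¬ ((st f)^[c] j = i ∨ (st f)^[c] j = v) := by
          push_neg; exact ⟨hmin c (by omega), path_ne_v c (by omega)⟩
        rw [Function.iterate_succ_apply' (st h') (c+1) i, ih hc', ← stoff _ hy]
        exact (Function.iterate_succ_apply' _ _ _).symm
  have hpath_v : (st h')^[t₁] i = v := by
    have := claim (t₁ - 1) le_rfl
    rw [show t₁ - 1 + 1 = t₁ from by omega] at this
    rw [this, hvdef]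
  have hscf : IsSCF E h' := by
    refine isSCF_of_stab (E := E) ?_ ?_
    · intro a b hab
      by_cases hav : a = v
      · subst hav; rw [h'v] at hab; cases hab
      by_cases hai : a = i
      · subst hai; rw [h'i] at hab; cases hab; exact hij
      · rw [h'off a (by push_neg; exact ⟨hai, hav⟩)] at hab; exact hedge a b hab
    · intro x
      by_cases hQ : ∃ t, ((st f)^[t] x = i ∨ (st f)^[t] x = v)
      · obtain ⟨t₂, hA, -⟩ := hit_agree (A := fun y => y = i ∨ y = v) stoff hQ
        rcases hA with hwi | hwv
        · refine ⟨t₁ + t₂, ?_⟩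
          rw [Function.iterate_add_apply, hwi, hpath_v]
          exact h'v
        · exact ⟨t₂, by rw [hwv]; exact h'v⟩
      · push_neg at hQ
        refine ⟨Fintype.card V, ?_⟩
        rw [← iterate_agree (A := fun y => y = i ∨ y = v) stoff
          (fun m _ => not_or.mpr (hQ m)), ← rootOf_def']
        have hri := hQ (Fintype.card V)
        rw [← rootOf_def'] at hri
        rw [h'off _ (not_or.mpr hri)]
        exact root_none hfscf x
  refine ⟨hscf, ?_, hfv, h'i⟩
  have := rootOf_iter hscf i t₁
  rw [hpath_v] at this
  rw [← this, rootOf_eq_self_iff hscf]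
  exact h'v


lemma update2_eq_of {g f : V → Option V} {a b : V} {x y : Option V} (hne : b ≠ a)
    (ha : f a = x) (hb : f b = y) (hoff : ∀ z, ¬ (z = a ∨ z = b) → g z = f z) :
    Function.update (Function.update g a x) b y = f := by
  funext z
  by_cases hzb : z = b
  · subst hzb; rw [Function.update_self, hb]
  by_cases hza : z = a
  · subst hza; rw [Function.update_of_ne hzb, Function.update_self, ha]
  · rw [Function.update_of_ne hzb, Function.update_of_ne hza,
      hoff z (not_or.mpr ⟨hza, hzb⟩)]

lemma scf_B_inv (hE : ∀ a, ¬ E a a) {h : V → Option V} (hh : IsSCF E h)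
    (hEk : E (rootOf h i) i) :
    IsSCF E (Function.update (Function.update h (rootOf h i) (some i)) i none) ∧
    E i ((h i).getD i) ∧
    rootOf (Function.update (Function.update h (rootOf h i) (some i)) i none)
      ((h i).getD i) = i ∧
    h i = some ((h i).getD i) ∧
    hitV (Function.update (Function.update h (rootOf h i) (some i)) i none) i
      ((h i).getD i) = rootOf h i := by
  classical
  set k := rootOf h i with hkdef
  have hk_ne : k ≠ i := fun he => hE i (he ▸ hEk)
  have hhi_ne : h i ≠ none := fun hn => hk_ne ((rootOf_eq_self_iff hh).mpr hn)
  have hhij : h i = some ((h i).getD i) := by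
    rcases he : h i with _ | z
    · exact absurd he hhi_ne
    · rfl
  set j := (h i).getD i with hjdef
  have hEij : E i j := hh.1 _ _ hhij
  have hji : j ≠ i := by simpa using no_return hh hhij 0
  set f' := Function.update (Function.update h k (some i)) i none with hf'def
  have f'i : f' i = none := Function.update_self _ _ _
  have f'k : f' k = some i := by
    rw [hf'def, Function.update_of_ne hk_ne, Function.update_self]
  have f'off : ∀ y, ¬ (y = i ∨ y = k) → f' y = h y := by
    intro y hy; push_neg at hy
    rw [hf'def, Function.update_of_ne hy.1, Function.update_of_ne hy.2]
  have stoff : ∀ y, ¬ (y = i ∨ y = k) → st h y = st f' y := by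
    intro y hy; unfold st; rw [f'off y hy]
  have avoid_i : ∀ t, (st h)^[t] j ≠ i := no_return hh hhij
  have hrootj : rootOf h j = k := rootOf_succ hh hhij
  have hexk : ∃ T, (st h)^[T] j = k :=
    ⟨Fintype.card V, by rw [← rootOf_def']; exact hrootj⟩
  set T₁ := Nat.find hexk with hT₁def
  have hT : (st h)^[T₁] j = k := Nat.find_spec hexk
  have hminT : ∀ m, m < T₁ → (st h)^[m] j ≠ k := fun m hm => Nat.find_min hexk hm
  have agree : ∀ m, m ≤ T₁ → (st f')^[m] j = (st h)^[m] j := by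
    intro m hm
    exact (iterate_agree (A := fun y => y = i ∨ y = k) stoff
      (fun m' hm' => not_or.mpr ⟨avoid_i m', hminT m' (lt_of_lt_of_le hm' hm)⟩)).symm
  have hf'T : (st f')^[T₁] j = k := (agree T₁ le_rfl).trans hT
  have hf'T1 : (st f')^[T₁+1] j = i := by
    rw [Function.iterate_succ_apply', hf'T, st_of_some f'k]
  have hminT1 : ∀ m, m < T₁ + 1 → (st f')^[m] j ≠ i := by
    intro m hm
    rw [agree m (by omega)]
    exact avoid_i m
  have hscf : IsSCF E f' := by
    refine isSCF_of_stab (E := E) ?_ ?_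
    · intro a b hab
      by_cases hai : a = i
      · subst hai; rw [f'i] at hab; cases hab
      by_cases hak : a = k
      · subst hak; rw [f'k] at hab; cases hab; exact hEk
      · rw [f'off a (not_or.mpr ⟨hai, hak⟩)] at hab; exact hh.1 a b hab
    · intro x
      by_cases hQ : ∃ t, ((st h)^[t] x = i ∨ (st h)^[t] x = k)
      · obtain ⟨t₂, hA, -⟩ := hit_agree (A := fun y => y = i ∨ y = k) stoff hQ
        rcases hA with hwi | hwk
        · exact ⟨t₂, by rw [hwi]; exact f'i⟩
        · refine ⟨t₂ + 1, ?_⟩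
          rw [Function.iterate_succ_apply', hwk, st_of_some f'k]
          exact f'i
      · push_neg at hQ
        refine ⟨Fintype.card V, ?_⟩
        rw [← iterate_agree (A := fun y => y = i ∨ y = k) stoff
          (fun m _ => not_or.mpr (hQ m)), ← rootOf_def']
        have hri := hQ (Fintype.card V)
        rw [← rootOf_def'] at hri
        rw [f'off _ (not_or.mpr hri)]
        exact root_none hh x
  have hrootf' : rootOf f' j = i := by
    have := rootOf_iter hscf j (T₁ + 1)
    rw [hf'T1] at this
    rw [← this, rootOf_eq_self_iff hscf]
    exact f'i
  have hhit : hitV f' i j = k := by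
    have := hitV_eq (t₁ := T₁ + 1) (by omega) hf'T1 hminT1
    simpa using this.trans hf'T
  exact ⟨hscf, hEij, hrootf', hhij, hhit⟩


end MapsB
end Maps

section ForestLemmas

lemma mem_forests {f : V → Option V} : f ∈ forests E ↔ IsSCF E f := by
  simp [forests]

lemma forests_nonempty : (forests E).Nonempty := by
  refine ⟨fun _ => none, ?_⟩
  rw [mem_forests]
  constructor
  · intro a b h; cases h
  · exact ⟨fun _ => 0, fun a b h => by cases h⟩

end ForestLemmas

section Count
variable [DecidableRel E]


theorem key_count (hE : ∀ a, ¬ E a a) (i : V) :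
    (1 + outDeg E i) * ((forests E).filter (fun f => rootOf f i = i)).card
      = (forests E).card +
        ∑ k ∈ inNbrs E i, ((forests E).filter (fun f => rootOf f i = k)).card := by
  -- the root-at-i forests are exactly those with `f i = none`
  have hfilter : (forests E).filter (fun f => rootOf f i = i)
      = (forests E).filter (fun f => f i = none) := by
    apply Finset.filter_congr
    intro f hf
    rw [mem_forests] at hf
    simp [rootOf_eq_self_iff (E := E) hf]
  set X : Finset ((V → Option V) × V) :=
    ((forests E).filter (fun f => f i = none)) ×ˢ (univ.filter (fun j => E i j)) with hX
  have hmemX : ∀ p : (V → Option V) × V, p ∈ X ↔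
      (IsSCF E p.1 ∧ p.1 i = none) ∧ E i p.2 := by
    intro p
    simp [hX, Finset.mem_product, mem_forests]
  have cardX : X.card = ((forests E).filter (fun f => f i = none)).card * outDeg E i := by
    rw [hX, Finset.card_product]; rfl
  have hsplit : (X.filter (fun p => rootOf p.1 p.2 = i)).card
      + (X.filter (fun p => ¬ (rootOf p.1 p.2 = i))).card = X.card :=
    Finset.card_filter_add_card_filter_not _
  -- Bijection A
  have bijA : (X.filter (fun p => ¬ (rootOf p.1 p.2 = i))).card
      = ((forests E).filter (fun g => ¬ (g i = none))).card := by
    refine Finset.card_bij' (fun p _ => Function.update p.1 i (some p.2))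
      (fun g _ => (Function.update g i none, (g i).getD i)) ?_ ?_ ?_ ?_
    · intro p hp
      rw [Finset.mem_filter] at hp
      obtain ⟨hpX, hproot⟩ := hp
      rw [hmemX] at hpX
      obtain ⟨⟨hscf, hpi⟩, hEij⟩ := hpX
      rw [Finset.mem_filter, mem_forests]
      refine ⟨scf_A_fwd hscf hpi hEij hproot, ?_⟩
      simp
    · intro g hg
      rw [Finset.mem_filter, mem_forests] at hg
      obtain ⟨hscf, hgi⟩ := hg
      have hgij : g i = some ((g i).getD i) := by
        rcases he : g i with _ | z
        · exact absurd he hgi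
        · rfl
      obtain ⟨hscf', hroot'⟩ := scf_A_inv (E := E) hscf hgij
      rw [Finset.mem_filter, hmemX]
      exact ⟨⟨⟨hscf', Function.update_self _ _ _⟩, hscf.1 _ _ hgij⟩, hroot'⟩
    · intro p hp
      rw [Finset.mem_filter] at hp
      obtain ⟨hpX, hproot⟩ := hp
      rw [hmemX] at hpX
      obtain ⟨⟨hscf, hpi⟩, hEij⟩ := hpX
      obtain ⟨f, j⟩ := p
      simp only [Prod.mk.injEq]
      constructor
      · rw [Function.update_idem, ← hpi, Function.update_eq_self]
      · simp
    · intro g hg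
      rw [Finset.mem_filter, mem_forests] at hg
      obtain ⟨hscf, hgi⟩ := hg
      have hgij : g i = some ((g i).getD i) := by
        rcases he : g i with _ | z
        · exact absurd he hgi
        · rfl
      simp only
      rw [Function.update_idem, ← hgij, Function.update_eq_self]
  -- Bijection B
  have bijB : (X.filter (fun p => rootOf p.1 p.2 = i)).card
      = ((forests E).filter (fun h => E (rootOf h i) i)).card := by
    refine Finset.card_bij'
      (fun p _ => Function.update (Function.update p.1 i (some p.2)) (hitV p.1 i p.2) none)
      (fun h _ => (Function.update (Function.update h (rootOf h i) (some i)) i none,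
        (h i).getD i)) ?_ ?_ ?_ ?_
    · intro p hp
      rw [Finset.mem_filter] at hp
      obtain ⟨hpX, hproot⟩ := hp
      rw [hmemX] at hpX
      obtain ⟨⟨hscf, hpi⟩, hEij⟩ := hpX
      obtain ⟨hscf', hroot', hfv, h'i⟩ := scf_B_fwd hE hscf hpi hEij hproot
      rw [Finset.mem_filter, mem_forests]
      refine ⟨hscf', ?_⟩
      rw [hroot']
      exact hscf.1 _ _ hfv
    · intro h hh
      rw [Finset.mem_filter, mem_forests] at hh
      obtain ⟨hscf, hEk⟩ := hh
      obtain ⟨hscf', hEij, hroot', hhij, hhit⟩ := scf_B_inv hE hscf hEk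
      rw [Finset.mem_filter, hmemX]
      exact ⟨⟨⟨hscf', Function.update_self _ _ _⟩, hEij⟩, hroot'⟩
    · intro p hp
      rw [Finset.mem_filter] at hp
      obtain ⟨hpX, hproot⟩ := hp
      rw [hmemX] at hpX
      obtain ⟨⟨hscf, hpi⟩, hEij⟩ := hpX
      obtain ⟨hscf', hroot', hfv, h'i⟩ := scf_B_fwd hE hscf hpi hEij hproot
      obtain ⟨f, j⟩ := p
      simp only at hroot' h'i hfv hpi hproot hEij ⊢
      have hvi : hitV f i j ≠ i := by
        intro he
        rw [he, hpi] at hfv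
        cases hfv
      rw [hroot', h'i]
      simp only [Prod.mk.injEq]
      refine ⟨update2_eq_of (Ne.symm hvi) hfv hpi ?_, rfl⟩
      intro z hz
      push_neg at hz
      rw [Function.update_of_ne hz.1, Function.update_of_ne hz.2]
    · intro h hh
      rw [Finset.mem_filter, mem_forests] at hh
      obtain ⟨hscf, hEk⟩ := hh
      obtain ⟨hscf', hEij, hroot', hhij, hhit⟩ := scf_B_inv hE hscf hEk
      simp only
      rw [hhit]
      have hk_ne : rootOf h i ≠ i := fun he => hE i (by rwa [he] at hEk)
      refine update2_eq_of hk_ne hhij (root_none hscf i) ?_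
      intro z hz
      push_neg at hz
      rw [Function.update_of_ne hz.1, Function.update_of_ne hz.2]
  -- the sum over in-neighbours
  have Ysum : ((forests E).filter (fun h => E (rootOf h i) i)).card
      = ∑ k ∈ inNbrs E i, ((forests E).filter (fun f => rootOf f i = k)).card := by
    simp only [Finset.card_filter]
    rw [Finset.sum_comm]
    refine Finset.sum_congr rfl fun f _ => ?_
    rw [Finset.sum_ite_eq (inNbrs E i) (rootOf f i) (fun _ => 1)]
    simp [inNbrs]
  have Ysplit : ((forests E).filter (fun f => f i = none)).card
      + ((forests E).filter (fun g => ¬ (g i = none))).card = (forests E).card :=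
    Finset.card_filter_add_card_filter_not _
  rw [hfilter]
  have goal2 : (forests E).card + ∑ k ∈ inNbrs E i, ((forests E).filter (fun f => rootOf f i = k)).card = (forests E).card + ((forests E).filter (fun h => E (rootOf h i) i)).card := by rw [Ysum]
  rw [goal2]
  calc (1 + outDeg E i) * ((forests E).filter (fun f => f i = none)).card
      = ((forests E).filter (fun f => f i = none)).card + X.card := by rw [cardX]; ring
    _ = ((forests E).filter (fun f => f i = none)).card
        + ((X.filter (fun p => rootOf p.1 p.2 = i)).card
          + (X.filter (fun p => ¬ (rootOf p.1 p.2 = i))).card) := by rw [hsplit]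
    _ = ((forests E).filter (fun f => f i = none)).card
        + (((forests E).filter (fun h => E (rootOf h i) i)).card
          + ((forests E).filter (fun g => ¬ (g i = none))).card) := by rw [bijA, bijB]
    _ = (((forests E).filter (fun f => f i = none)).card
          + ((forests E).filter (fun g => ¬ (g i = none))).card)
        + ((forests E).filter (fun h => E (rootOf h i) i)).card := by ring
    _ = (forests E).card + ((forests E).filter (fun h => E (rootOf h i) i)).card := by
          rw [Ysplit]

end Count

lemma varVal_eq {g : (V → Option V) → ℝ} (hn : ((forests E).card : ℝ) ≠ 0) :
    varVal E g = expVal E (fun f => g f ^ 2) - (expVal E g) ^ 2 := by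
  unfold varVal expVal
  set n : ℝ := ((forests E).card : ℝ) with hndef
  set S : ℝ := ∑ f ∈ forests E, g f with hSdef
  have expand : ∀ f ∈ forests E,
      (g f - S / n) ^ 2 = g f ^ 2 - 2 * (S / n) * g f + (S / n) ^ 2 := fun f _ => by ring
  rw [Finset.sum_congr rfl expand, Finset.sum_add_distrib, Finset.sum_sub_distrib,
    ← Finset.mul_sum, Finset.sum_const, nsmul_eq_mul, ← hSdef, ← hndef]
  field_simp
  ring

theorem main_identity (hE : ∀ a, ¬ E a a) [DecidableRel E] (i : V) :
    varVal E (indEst i i) -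
        varVal E (fun f => (1 / (1 + (outDeg E i : ℝ))) *
          (1 + ∑ k ∈ inNbrs E i, indEst i k f))
      = 2 * (1 - fOmega E i i) / (1 + (outDeg E i : ℝ)) ^ 2 +
          (outDeg E i : ℝ) * ((outDeg E i : ℝ) - 1) * fOmega E i i /
            (1 + (outDeg E i : ℝ)) ^ 2 := by
  have hn0 : 0 < ((forests E).card : ℝ) := by
    have := forests_nonempty (E := E)
    exact_mod_cast Finset.card_pos.mpr this
  have hn : ((forests E).card : ℝ) ≠ 0 := ne_of_gt hn0
  set n : ℝ := ((forests E).card : ℝ) with hndef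
  set d : ℝ := (outDeg E i : ℝ) with hddef
  have hd0 : 0 ≤ d := by rw [hddef]; positivity
  have h1d : (0:ℝ) < 1 + d := by linarith
  have h1d' : (1:ℝ) + d ≠ 0 := ne_of_gt h1d
  set c : ℝ := (((forests E).filter (fun f => rootOf f i = i)).card : ℝ) with hcdef
  set A : ℝ := ((∑ k ∈ inNbrs E i, ((forests E).filter
    (fun f => rootOf f i = k)).card : ℕ) : ℝ) with hAdef
  have hkey : (1 + d) * c = n + A := by
    rw [hndef, hddef, hcdef, hAdef]
    push_cast
    exact_mod_cast congrArg (fun x : ℕ => (x : ℝ)) (key_count hE i)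
  have homega : fOmega E i i = c / n := rfl
  -- expectation of the indicator estimator
  have hsum1 : ∑ f ∈ forests E, indEst i i f = c := by
    rw [hcdef]
    unfold indEst
    rw [Finset.sum_boole]
  have h1 : expVal E (indEst i i) = c / n := by
    unfold expVal; rw [hsum1]
  have h2 : expVal E (fun f => indEst i i f ^ 2) = c / n := by
    unfold expVal
    rw [Finset.sum_congr rfl (fun f _ => by
      unfold indEst; split <;> norm_num : ∀ f ∈ forests E, indEst i i f ^ 2 = indEst i i f)]
    rw [hsum1]
  -- the averaged estimator
  set S : (V → Option V) → ℝ := fun f => ∑ k ∈ inNbrs E i, indEst i k f with hSdef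
  have hS : ∀ f, S f = if rootOf f i ∈ inNbrs E i then 1 else 0 := by
    intro f
    rw [hSdef]
    unfold indEst
    exact Finset.sum_ite_eq (inNbrs E i) (rootOf f i) (fun _ => (1:ℝ))
  have hSsum : ∑ f ∈ forests E, S f = A := by
    rw [hSdef, hAdef, Finset.sum_comm]
    push_cast
    refine Finset.sum_congr rfl fun k _ => ?_
    unfold indEst
    rw [Finset.sum_boole]
  have hSsq : ∀ f, (1 + S f) ^ 2 = 1 + 3 * S f := by
    intro f
    rw [hS f]
    split <;> norm_num
  have h3 : expVal E (fun f => (1 / (1 + d)) * (1 + S f))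
      = (1 / (1 + d)) * (1 + A / n) := by
    unfold expVal
    rw [← Finset.mul_sum, Finset.sum_add_distrib, Finset.sum_const, nsmul_eq_mul, mul_one,
      hSsum, ← hndef]
    field_simp
  have h4 : expVal E (fun f => ((1 / (1 + d)) * (1 + S f)) ^ 2)
      = (1 / (1 + d)) ^ 2 * (1 + 3 * A / n) := by
    unfold expVal
    rw [Finset.sum_congr rfl (fun f _ => by
      rw [mul_pow, hSsq f] : ∀ f ∈ forests E,
        ((1 / (1 + d)) * (1 + S f)) ^ 2 = (1 / (1 + d)) ^ 2 * (1 + 3 * S f))]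
    rw [← Finset.mul_sum, Finset.sum_add_distrib, Finset.sum_const, nsmul_eq_mul, mul_one,
      ← Finset.mul_sum, hSsum, ← hndef]
    field_simp
  have var1 : varVal E (indEst i i) = c / n - (c / n) ^ 2 := by
    rw [varVal_eq hn, h1, h2]
  have var2 : varVal E (fun f => (1 / (1 + d)) * (1 + S f))
      = (1 / (1 + d)) ^ 2 * (1 + 3 * A / n) - ((1 / (1 + d)) * (1 + A / n)) ^ 2 := by
    rw [varVal_eq hn, h3, h4]
  rw [homega, var1]
  rw [show (fun f => (1 / (1 + (outDeg E i : ℝ))) *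
      (1 + ∑ k ∈ inNbrs E i, indEst i k f)) = fun f => (1 / (1 + d)) * (1 + S f) from rfl]
  rw [var2]
  have hArw : A = (1 + d) * c - n := by linarith
  rw [hArw]
  field_simp
  ring

end SCFAux

/-- the variance gap Var(ω̂_ii) − Var(ω̄_ii) equals
2(1−ω_ii)/(1+d_i)² + d_i(d_i−1)ω_ii/(1+d_i)², which is nonnegative. -/
theorem diag_variance_gap {V : Type*} [Fintype V] [DecidableEq V]
    (E : V → V → Prop) [DecidableRel E] (hE : ∀ i, ¬ E i i) (i : V) :
    varVal E (indEst i i) -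
        varVal E (fun f => (1 / (1 + (outDeg E i : ℝ))) *
          (1 + ∑ k ∈ inNbrs E i, indEst i k f))
      = 2 * (1 - fOmega E i i) / (1 + (outDeg E i : ℝ)) ^ 2 +
          (outDeg E i : ℝ) * ((outDeg E i : ℝ) - 1) * fOmega E i i /
            (1 + (outDeg E i : ℝ)) ^ 2 ∧
    0 ≤ 2 * (1 - fOmega E i i) / (1 + (outDeg E i : ℝ)) ^ 2 +
          (outDeg E i : ℝ) * ((outDeg E i : ℝ) - 1) * fOmega E i i /
            (1 + (outDeg E i : ℝ)) ^ 2 := by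
  constructor
  · exact SCFAux.main_identity hE i
  · have hn0 : 0 < ((forests E).card : ℝ) := by
      have := SCFAux.forests_nonempty (E := E)
      exact_mod_cast Finset.card_pos.mpr this
    have homega0 : 0 ≤ fOmega E i i := by
      unfold fOmega
      positivity
    have homega1 : fOmega E i i ≤ 1 := by
      unfold fOmega
      rw [div_le_one hn0]
      exact_mod_cast Finset.card_filter_le _ _
    have hd0 : (0:ℝ) ≤ (outDeg E i : ℝ) := by positivity
    have hdd : 0 ≤ (outDeg E i : ℝ) * ((outDeg E i : ℝ) - 1) := by
      rcases Nat.eq_zero_or_pos (outDeg E i) with h | h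
      · rw [h]; norm_num
      · have h1 : (1:ℝ) ≤ (outDeg E i : ℝ) := by exact_mod_cast h
        apply mul_nonneg hd0
        linarith
    apply add_nonneg
    · apply div_nonneg
      · linarith
      · positivity
    · apply div_nonneg
      · exact mul_nonneg hdd homega0
      · positivity
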